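/- Let ρ, r₁, …, r_{d-1} be positive reals with ρ ≤ rᵢ ≤ 1 for all i. Define F(r;ρ) = { y ∈ ℝ^d : |yᵢ| < ρ/rᵢ for 1 ≤ i ≤ d-1, dist(y, S^{d-1}) < ρ, y_d < 0 }. Then |F(r;ρ)| is comparable (with constants depending only on d) to ρ·∏_{i=1}^{d-1} (ρ/rᵢ) = ρ^d / ∏ rᵢ. -/

import Mathlib

open MeasureTheory

/-- The dual curved box `F(r;ρ)`: a `ρ`-neighborhood of a cap of the unit sphere near the
south pole, with perpendicular radii `ρ/rᵢ`.  Here `d = n+1`. -/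
def curvedBoxF (n : ℕ) (r : Fin n → ℝ) (ρ : ℝ) : Set (EuclideanSpace ℝ (Fin (n + 1))) :=
  {y | (∀ i : Fin n, |y i.castSucc| < ρ / r i) ∧
    Metric.infDist y (Metric.sphere (0 : EuclideanSpace ℝ (Fin (n + 1))) 1) < ρ ∧
    y (Fin.last n) < 0}

open Metric Set Real



lemma infDist_sphere_eq {E : Type*} [NormedAddCommGroup E] [NormedSpace ℝ E] [Nontrivial E]
    (y : E) : Metric.infDist y (Metric.sphere (0:E) 1) < ρ ↔ |‖y‖ - 1| < ρ := by
  have hne : (Metric.sphere (0:E) 1).Nonempty := NormedSpace.sphere_nonempty.2 zero_le_one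
  constructor
  · intro h
    obtain ⟨z, hz, hd⟩ := Metric.infDist_lt_iff hne |>.1 h
    have : |‖y‖ - ‖z‖| ≤ dist y z := (dist_eq_norm y z ▸ abs_norm_sub_norm_le _ _)
    rw [mem_sphere_zero_iff_norm.1 hz] at this
    linarith
  · intro h
    rcases eq_or_ne y 0 with rfl | hy
    · obtain ⟨z, hz⟩ := hne
      have := Metric.infDist_le_dist_of_mem (x := (0:E)) hz
      simp [dist_eq_norm, mem_sphere_zero_iff_norm.1 hz] at this ⊢
      simpa [mem_sphere_zero_iff_norm.1 hz] using lt_of_le_of_lt this (by simpa using h)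
    · have hy' : ‖y‖ ≠ 0 := norm_ne_zero_iff.2 hy
      have hz : ‖y‖⁻¹ • y ∈ Metric.sphere (0:E) 1 := by
        simp [norm_smul, abs_of_nonneg (inv_nonneg.2 (norm_nonneg y)), inv_mul_cancel₀ hy']
      have hd : dist y (‖y‖⁻¹ • y) = |‖y‖ - 1| := by
        rw [dist_eq_norm]
        have : y - ‖y‖⁻¹ • y = (1 - ‖y‖⁻¹) • y := by
          rw [sub_smul, one_smul]
        rw [this, norm_smul, Real.norm_eq_abs]
        rw [show |1 - ‖y‖⁻¹| * ‖y‖ = |(1 - ‖y‖⁻¹) * ‖y‖| by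
          rw [abs_mul, abs_of_nonneg (norm_nonneg y)]]
        congr 1
        rw [sub_mul, one_mul, inv_mul_cancel₀ hy']
      calc Metric.infDist y _ ≤ dist y (‖y‖⁻¹ • y) := Metric.infDist_le_dist_of_mem hz
        _ < ρ := by rw [hd]; exact h



lemma sq_lt_of_abs {x R : ℝ} (hR : 0 ≤ R) (h : x^2 < R^2) : |x| < R := by
  nlinarith [abs_nonneg x, sq_abs x]

lemma ann2D {c a : ℝ} (hca : c < a) :
    volume {v : ℝ × ℝ | c < v.1^2 + v.2^2 ∧ v.1^2 + v.2^2 < a} ≤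
      ENNReal.ofReal ((a - c) * π) := by
  set U := {v : ℝ × ℝ | c < v.1^2 + v.2^2 ∧ v.1^2 + v.2^2 < a} with hU
  have hUm : MeasurableSet U := by
    apply MeasurableSet.inter
    · exact measurableSet_lt measurable_const ((measurable_fst.pow_const 2).add
        (measurable_snd.pow_const 2))
    · exact measurableSet_lt ((measurable_fst.pow_const 2).add
        (measurable_snd.pow_const 2)) measurable_const
  rcases le_or_gt a 0 with ha | ha
  · have : U = ∅ := by
      ext v; simp only [hU, mem_setOf_eq, mem_empty_iff_false, iff_false]
      rintro ⟨-, h2⟩; nlinarith [sq_nonneg v.1, sq_nonneg v.2]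
    simp [this]
  · have hvol : volume U = volume (Complex.measurableEquivRealProd ⁻¹' U) :=
      (Complex.volume_preserving_equiv_real_prod.measure_preimage hUm.nullMeasurableSet).symm
    rw [hvol]
    have hpi : (NNReal.pi : ENNReal) = ENNReal.ofReal π := by
      rw [← NNReal.coe_real_pi, ENNReal.ofReal_coe_nnreal]
    have habs : ∀ z : ℂ, ‖z‖ ^ 2 = z.re^2 + z.im^2 := by
      intro z; rw [Complex.sq_norm, Complex.normSq_apply]; ring
    rcases le_or_gt c 0 with hc | hc
    · -- just use the ball
      have hsub : Complex.measurableEquivRealProd ⁻¹' U ⊆ Metric.ball (0:ℂ) (Real.sqrt a) := by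
        intro z hz
        simp only [mem_preimage, Complex.measurableEquivRealProd_apply, hU, mem_setOf_eq] at hz
        simp only [Metric.mem_ball, Complex.dist_eq, sub_zero]
        have h2 : ‖z‖ ^ 2 < a := by rw [habs]; exact hz.2
        exact (Real.lt_sqrt (norm_nonneg _)).2 h2
      calc volume (Complex.measurableEquivRealProd ⁻¹' U)
          ≤ volume (Metric.ball (0:ℂ) (Real.sqrt a)) := measure_mono hsub
        _ = ENNReal.ofReal (Real.sqrt a) ^ 2 * NNReal.pi := Complex.volume_ball _ _
        _ = ENNReal.ofReal a * ENNReal.ofReal π := by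
            rw [← ENNReal.ofReal_pow (Real.sqrt_nonneg a), Real.sq_sqrt ha.le, hpi]
        _ = ENNReal.ofReal (a * π) := (ENNReal.ofReal_mul ha.le).symm
        _ ≤ ENNReal.ofReal ((a - c) * π) := by
            apply ENNReal.ofReal_le_ofReal
            nlinarith [Real.pi_pos]
    · have hsub : Complex.measurableEquivRealProd ⁻¹' U ⊆
          Metric.ball (0:ℂ) (Real.sqrt a) \ Metric.closedBall (0:ℂ) (Real.sqrt c) := by
        intro z hz
        simp only [mem_preimage, Complex.measurableEquivRealProd_apply, hU, mem_setOf_eq] at hz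
        obtain ⟨h1, h2⟩ := hz
        constructor
        · simp only [Metric.mem_ball, Complex.dist_eq, sub_zero]
          have h2' : ‖z‖ ^ 2 < a := by rw [habs]; exact h2
          exact (Real.lt_sqrt (norm_nonneg _)).2 h2'
        · simp only [Metric.mem_closedBall, Complex.dist_eq, sub_zero, not_le]
          have h1' : c < ‖z‖ ^ 2 := by rw [habs]; exact h1
          nlinarith [Real.sq_sqrt hc.le, Real.sqrt_nonneg c, norm_nonneg z]
      have hballs : Metric.closedBall (0:ℂ) (Real.sqrt c) ⊆ Metric.ball (0:ℂ) (Real.sqrt a) :=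
        Metric.closedBall_subset_ball (Real.sqrt_lt_sqrt hc.le hca)
      calc volume (Complex.measurableEquivRealProd ⁻¹' U)
          ≤ volume (Metric.ball (0:ℂ) (Real.sqrt a) \ Metric.closedBall (0:ℂ) (Real.sqrt c)) :=
            measure_mono hsub
        _ = volume (Metric.ball (0:ℂ) (Real.sqrt a)) -
            volume (Metric.closedBall (0:ℂ) (Real.sqrt c)) := by
            apply measure_diff hballs measurableSet_closedBall.nullMeasurableSet
            rw [Complex.volume_closedBall]
            exact ENNReal.mul_ne_top (by simp [ENNReal.pow_ne_top, ENNReal.ofReal_ne_top])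
              ENNReal.coe_ne_top
        _ = ENNReal.ofReal (Real.sqrt a) ^ 2 * NNReal.pi -
            ENNReal.ofReal (Real.sqrt c) ^ 2 * NNReal.pi := by
            rw [Complex.volume_ball, Complex.volume_closedBall]
        _ = (ENNReal.ofReal a - ENNReal.ofReal c) * ENNReal.ofReal π := by
            rw [← ENNReal.ofReal_pow (Real.sqrt_nonneg a), Real.sq_sqrt ha.le,
              ← ENNReal.ofReal_pow (Real.sqrt_nonneg c), Real.sq_sqrt hc.le, hpi,
              ENNReal.sub_mul]
            intro _ _; exact ENNReal.ofReal_ne_top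
        _ = ENNReal.ofReal ((a - c) * π) := by
            rw [← ENNReal.ofReal_sub _ hc.le, ← ENNReal.ofReal_mul (by linarith)]

-- section iff: for t < 0, 0 ≤ q
lemma key_iff {ρ q t : ℝ} (hρ : 0 < ρ) (hq : 0 ≤ q) (ht : t < 0) :
    |Real.sqrt (q + t^2) - 1| < ρ ↔
      (-Real.sqrt ((1+ρ)^2 - q) < t ∧ t < -Real.sqrt ((max (1-ρ) 0)^2 - q)) := by
  have ht2 : 0 < t^2 := by nlinarith
  have hmt : 0 < -t := by linarith
  rw [abs_sub_lt_iff]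
  constructor
  · rintro ⟨h1, h2⟩
    -- h1 : sqrt (q+t²) - 1 < ρ i.e. sqrt < 1 + ρ ; h2 : 1 - ρ < sqrt
    have hlt : q + t^2 < (1+ρ)^2 := by
      have := (Real.sqrt_lt' (by linarith : (0:ℝ) < 1 + ρ)).1 (by linarith)
      linarith
    constructor
    · -- -sqrt a < t  ⟺  -t < sqrt a
      have : -t < Real.sqrt ((1+ρ)^2 - q) := by
        rw [show (-t) = Real.sqrt ((-t)^2) by rw [Real.sqrt_sq hmt.le]]
        apply Real.sqrt_lt_sqrt (by positivity)
        nlinarith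
      linarith
    · -- t < -sqrt c ⟺ sqrt c < -t ⟺ c < t²
      have : Real.sqrt ((max (1-ρ) 0)^2 - q) < -t := by
        rw [Real.sqrt_lt' hmt]
        rcases le_or_gt (1-ρ) 0 with hm | hm
        · rw [max_eq_right hm]; nlinarith
        · rw [max_eq_left hm.le]
          have : 1 - ρ < Real.sqrt (q + t^2) := by linarith
          have := (Real.lt_sqrt (by positivity)).1 this
          nlinarith
      linarith
  · rintro ⟨h1, h2⟩
    have ha : t^2 < (1+ρ)^2 - q := by
      have h1' : -t < Real.sqrt ((1+ρ)^2 - q) := by linarith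
      have h0 : 0 ≤ (1+ρ)^2 - q := by
        by_contra hc
        push_neg at hc
        rw [Real.sqrt_eq_zero_of_nonpos hc.le] at h1'
        linarith
      have := (Real.lt_sqrt hmt.le).1 h1'
      nlinarith
    have hc : (max (1-ρ) 0)^2 - q < t^2 := by
      have h2' : Real.sqrt ((max (1-ρ) 0)^2 - q) < -t := by linarith
      have := (Real.sqrt_lt' hmt).1 h2'
      nlinarith
    constructor
    · -- sqrt(q+t²) < 1+ρ
      have := Real.sqrt_lt_sqrt (by positivity : (0:ℝ) ≤ q + t^2) (by linarith : q + t^2 < (1+ρ)^2)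
      rw [Real.sqrt_sq (by linarith : (0:ℝ) ≤ 1+ρ)] at this
      linarith
    · -- 1 - ρ < sqrt(q+t²)
      rcases le_or_gt (1-ρ) 0 with hm | hm
      · have : 0 < Real.sqrt (q + t^2) := Real.sqrt_pos.2 (by positivity)
        linarith
      · rw [max_eq_left hm.le] at hc
        have : 1 - ρ < Real.sqrt (q + t^2) := by
          rw [show (1-ρ) = Real.sqrt ((1-ρ)^2) by rw [Real.sqrt_sq hm.le]]
          apply Real.sqrt_lt_sqrt (by positivity)
          nlinarith
        linarith

-- lower bound on the gap
lemma len_lower {ρ q : ℝ} (hρ : 0 < ρ) (hq : 0 ≤ q) (hq2 : q ≤ 1/4) :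
    ρ/2 ≤ Real.sqrt ((1+ρ)^2 - q) - Real.sqrt ((max (1-ρ) 0)^2 - q) := by
  set m := max (1-ρ) 0 with hm
  have hm0 : 0 ≤ m := le_max_right _ _
  set a := (1+ρ)^2 - q with ha
  set c := m^2 - q with hc
  have ha0 : 0 < a := by nlinarith
  have hsa : Real.sqrt a ^ 2 = a := Real.sq_sqrt ha0.le
  have hsa0 : 0 ≤ Real.sqrt a := Real.sqrt_nonneg _
  rcases le_or_gt c 0 with h | h
  · rw [Real.sqrt_eq_zero_of_nonpos h]
    nlinarith
  · have hmpos : 0 < m := by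
      rcases le_or_gt (1-ρ) 0 with h' | h'
      · exfalso; rw [hm, max_eq_right h'] at hc; nlinarith
      · linarith [le_max_left (1-ρ) 0]
    have hm1 : m = 1 - ρ := by
      rw [hm, max_eq_left]; rcases le_or_gt (1-ρ) 0 with h'|h'; · exfalso; linarith [hm ▸ max_eq_right h' ▸ hmpos]
      · linarith
    have hsc : Real.sqrt c ^ 2 = c := Real.sq_sqrt h.le
    have hsc0 : 0 ≤ Real.sqrt c := Real.sqrt_nonneg _
    have hsa2 : Real.sqrt a ≤ 1 + ρ := by
      rw [show (1+ρ) = Real.sqrt ((1+ρ)^2) by rw [Real.sqrt_sq (by linarith)]]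
      exact Real.sqrt_le_sqrt (by nlinarith)
    have hsc2 : Real.sqrt c ≤ 1 := by
      rw [show (1:ℝ) = Real.sqrt 1 by simp]
      apply Real.sqrt_le_sqrt
      have hρ1 : ρ ≤ 1 := by nlinarith [le_max_left (1-ρ) 0]
      nlinarith
    have hρ1 : ρ ≤ 1 := by nlinarith [hm1 ▸ hmpos]
    have key : (Real.sqrt a - Real.sqrt c) * (Real.sqrt a + Real.sqrt c) = 4*ρ := by
      have : a - c = 4*ρ := by rw [ha, hc, hm1]; ring
      nlinarith
    nlinarith

-- upper bound on the gap, valid when q ≤ 1/2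
lemma len_upper1 {ρ q : ℝ} (hρ : 0 < ρ) (hq : 0 ≤ q) (hq2 : q ≤ 1/2) :
    Real.sqrt ((1+ρ)^2 - q) - Real.sqrt ((max (1-ρ) 0)^2 - q) ≤ 8*ρ := by
  set m := max (1-ρ) 0 with hm
  set a := (1+ρ)^2 - q with ha
  set c := m^2 - q with hc
  have ha0 : 0 < a := by nlinarith
  have hsa : Real.sqrt a ^ 2 = a := Real.sq_sqrt ha0.le
  have hsa0 : 0 ≤ Real.sqrt a := Real.sqrt_nonneg _
  have hsc0 : 0 ≤ Real.sqrt c := Real.sqrt_nonneg _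
  rcases le_or_gt 1 ρ with h1 | h1
  · -- ρ ≥ 1 : sqrt a ≤ 1+ρ ≤ 2ρ ≤ 8ρ
    have hsa2 : Real.sqrt a ≤ 1 + ρ := by
      rw [show (1+ρ) = Real.sqrt ((1+ρ)^2) by rw [Real.sqrt_sq (by linarith)]]
      exact Real.sqrt_le_sqrt (by nlinarith)
    linarith
  · have hm1 : m = 1 - ρ := max_eq_left (by linarith)
    rcases le_or_gt c 0 with h | h
    · -- (1-ρ)² ≤ q ≤ 1/2 < 9/16 forces ρ > 1/4
      rw [Real.sqrt_eq_zero_of_nonpos h]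
      have hql : (1-ρ)^2 ≤ 1/2 := by rw [hc, hm1] at h; linarith
      have hρ4 : 1/4 < ρ := by nlinarith
      have hsa2 : Real.sqrt a ≤ 1 + ρ := by
        rw [show (1+ρ) = Real.sqrt ((1+ρ)^2) by rw [Real.sqrt_sq (by linarith)]]
        exact Real.sqrt_le_sqrt (by nlinarith)
      linarith
    · have hsc : Real.sqrt c ^ 2 = c := Real.sq_sqrt h.le
      have key : (Real.sqrt a - Real.sqrt c) * (Real.sqrt a + Real.sqrt c) = 4*ρ := by
        have : a - c = 4*ρ := by rw [ha, hc, hm1]; ring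
        nlinarith
      -- sqrt a ≥ sqrt(1/2) ≥ 2/3
      have hsa3 : 2/3 ≤ Real.sqrt a := by
        rw [show (2/3:ℝ) = Real.sqrt ((2/3)^2) by rw [Real.sqrt_sq (by norm_num)]]
        apply Real.sqrt_le_sqrt; nlinarith
      nlinarith

noncomputable section

variable {n : ℕ}

def Sq (z : Fin n → ℝ) : ℝ := ∑ i, (z i)^2

lemma Sq_nonneg (z : Fin n → ℝ) : 0 ≤ Sq z := Finset.sum_nonneg fun i _ => sq_nonneg _

lemma Sq_continuous : Continuous (Sq (n := n)) :=
  continuous_finset_sum _ fun i _ => (continuous_apply i).pow 2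

def ff (ρ : ℝ) (z : Fin n → ℝ) : ℝ := -Real.sqrt ((1+ρ)^2 - Sq z)
def gg (ρ : ℝ) (z : Fin n → ℝ) : ℝ := -Real.sqrt ((max (1-ρ) 0)^2 - Sq z)

lemma ff_measurable (ρ : ℝ) : Measurable (ff (n := n) ρ) :=
  ((Real.continuous_sqrt.comp (continuous_const.sub Sq_continuous)).neg).measurable

lemma gg_measurable (ρ : ℝ) : Measurable (gg (n := n) ρ) :=
  ((Real.continuous_sqrt.comp (continuous_const.sub Sq_continuous)).neg).measurable

lemma gg_nonpos (ρ : ℝ) (z : Fin n → ℝ) : gg ρ z ≤ 0 :=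
  neg_nonpos.2 (Real.sqrt_nonneg _)

/-- the projection map -/
def TT (x : Fin (n+1) → ℝ) : (Fin n → ℝ) × ℝ := (fun i => x i.castSucc, x (Fin.last n))

lemma TT_measurePreserving :
    MeasurePreserving (TT (n := n)) volume volume := by
  have h1 := volume_preserving_piFinSuccAbove (fun _ : Fin (n+1) => ℝ) (Fin.last n)
  have h2 : MeasurePreserving (Prod.swap : ℝ × (Fin n → ℝ) → (Fin n → ℝ) × ℝ)
      volume volume := by
    rw [Measure.volume_eq_prod, Measure.volume_eq_prod]
    exact Measure.measurePreserving_swap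
  have h3 := h2.comp h1
  have : TT (n := n) = Prod.swap ∘ (MeasurableEquiv.piFinSuccAbove (fun _ => ℝ) (Fin.last n)) := by
    funext x
    simp only [Function.comp_apply, MeasurableEquiv.piFinSuccAbove_apply, Prod.swap_prod_mk, TT]
    refine Prod.ext ?_ rfl
    funext j
    simp [Fin.removeNth, Fin.succAbove_last, Fin.init]
  rwa [this]

def BB (ρ : ℝ) (r : Fin n → ℝ) : Set (Fin n → ℝ) :=
  Set.pi univ fun i => Ioo (-(ρ / r i)) (ρ / r i)

lemma mem_BB {ρ : ℝ} {r : Fin n → ℝ} {z : Fin n → ℝ} :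
    z ∈ BB ρ r ↔ ∀ i, |z i| < ρ / r i := by
  simp [BB, mem_Ioo, abs_lt, and_comm]

lemma BB_measurableSet (ρ : ℝ) (r : Fin n → ℝ) : MeasurableSet (BB ρ r) :=
  MeasurableSet.univ_pi fun i => measurableSet_Ioo

lemma volume_BB {ρ : ℝ} {r : Fin n → ℝ} (h : ∀ i, 0 < ρ / r i) :
    volume (BB ρ r) = ENNReal.ofReal (∏ i, (2 * (ρ / r i))) := by
  rw [BB, volume_pi_pi]
  have : ∀ i : Fin n, volume (Ioo (-(ρ / r i)) (ρ / r i)) = ENNReal.ofReal (2 * (ρ / r i)) := by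
    intro i; rw [Real.volume_Ioo]; congr 1; ring
  simp_rw [this]
  rw [← ENNReal.ofReal_prod_of_nonneg (fun i _ => le_of_lt (by have := h i; linarith))]

/-- the region between `ff` and `gg` -/
lemma curvedBoxF_eq_preimage (ρ : ℝ) (r : Fin n → ℝ) (hρ : 0 < ρ) :
    curvedBoxF n r ρ =
      (fun y : EuclideanSpace ℝ (Fin (n+1)) => TT (fun j => y j)) ⁻¹'
        regionBetween (ff ρ) (gg ρ) (BB ρ r) := by
  ext y
  simp only [curvedBoxF, mem_setOf_eq, mem_preimage, regionBetween, TT, mem_Ioo, mem_BB]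
  have hnorm : ‖y‖ = Real.sqrt (Sq (fun i => y i.castSucc) + (y (Fin.last n))^2) := by
    rw [EuclideanSpace.norm_eq]
    congr 1
    rw [Sq, ← Fin.sum_univ_castSucc (f := fun j => (y j)^2)]
    congr 1 with j
    rw [Real.norm_eq_abs, sq_abs]
  constructor
  · rintro ⟨h1, h2, h3⟩
    rw [infDist_sphere_eq, hnorm] at h2
    exact ⟨h1, (key_iff hρ (Sq_nonneg _) h3).1 h2⟩
  · rintro ⟨h1, h2⟩
    have h3 : y (Fin.last n) < 0 := lt_of_lt_of_le h2.2 (gg_nonpos ρ _)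
    refine ⟨h1, ?_, h3⟩
    rw [infDist_sphere_eq, hnorm]
    exact (key_iff hρ (Sq_nonneg _) h3).2 h2

lemma volume_curvedBoxF (ρ : ℝ) (r : Fin n → ℝ) (hρ : 0 < ρ) :
    volume (curvedBoxF n r ρ) =
      volume (regionBetween (ff ρ) (gg ρ) (BB ρ r)) := by
  rw [curvedBoxF_eq_preimage ρ r hρ]
  have hmeas : MeasurableSet (regionBetween (ff ρ) (gg ρ) (BB ρ r)) :=
    measurableSet_regionBetween (ff_measurable ρ) (gg_measurable ρ) (BB_measurableSet ρ r)
  have hcomp : MeasurePreserving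
      (fun y : EuclideanSpace ℝ (Fin (n+1)) => TT (fun j => y j)) volume volume := by
    have h1 := PiLp.volume_preserving_ofLp (ι := Fin (n+1))
    have h2 := TT_measurePreserving (n := n)
    exact h2.comp h1
  exact hcomp.measure_preimage hmeas.nullMeasurableSet

lemma volume_regionBetween' (ρ : ℝ) (r : Fin n → ℝ) {s : Set (Fin n → ℝ)}
    (hs : MeasurableSet s) :
    volume (regionBetween (ff ρ) (gg ρ) s) =
      ∫⁻ z in s, ENNReal.ofReal ((gg (n := n) ρ - ff (n := n) ρ) z) := by
  rw [Measure.volume_eq_prod]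
  exact volume_regionBetween_eq_lintegral' (ff_measurable ρ) (gg_measurable ρ) hs

lemma volume_pi_Ioo {w : Fin n → ℝ} (h : ∀ i, 0 ≤ w i) :
    volume (Set.pi univ fun i => Ioo (-(w i)) (w i)) = ENNReal.ofReal (∏ i, (2 * w i)) := by
  rw [volume_pi_pi]
  have : ∀ i : Fin n, volume (Ioo (-(w i)) (w i)) = ENNReal.ofReal (2 * w i) := by
    intro i; rw [Real.volume_Ioo]; congr 1; ring
  simp_rw [this]
  rw [← ENNReal.ofReal_prod_of_nonneg (fun i _ => by have := h i; linarith)]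

lemma lower_bound (ρ : ℝ) (r : Fin n → ℝ) (hρ : 0 < ρ) (hr : ∀ i, ρ ≤ r i ∧ r i ≤ 1) :
    ENNReal.ofReal (((1/2) * (1/((n:ℝ)+1))^n) * (ρ * ∏ i, ρ / r i)) ≤
      volume (regionBetween (ff ρ) (gg ρ) (BB ρ r)) := by
  have hrpos : ∀ i, 0 < r i := fun i => lt_of_lt_of_le hρ (hr i).1
  have ht : ∀ i, 0 < ρ / r i := fun i => div_pos hρ (hrpos i)
  have ht1 : ∀ i, ρ / r i ≤ 1 := fun i => (div_le_one (hrpos i)).2 (hr i).1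
  have hn1 : (0:ℝ) < (n:ℝ) + 1 := by positivity
  set w : Fin n → ℝ := fun i => (ρ / r i) * (1/(2*((n:ℝ)+1))) with hw
  have hwpos : ∀ i, 0 < w i := fun i => by have := ht i; positivity
  have hwle : ∀ i, w i ≤ ρ / r i := by
    intro i
    rw [hw]
    have h1 : (1:ℝ)/(2*((n:ℝ)+1)) ≤ 1 := by
      rw [div_le_one (by positivity)]; linarith
    nlinarith [ht i]
  have hwsmall : ∀ i, w i ≤ 1/(2*((n:ℝ)+1)) := by
    intro i
    rw [hw]
    have := ht1 i; have := ht i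
    show ρ / r i * (1/(2*((n:ℝ)+1))) ≤ 1/(2*((n:ℝ)+1))
    have h2 : (0:ℝ) < 1/(2*((n:ℝ)+1)) := by positivity
    nlinarith
  set B₀ : Set (Fin n → ℝ) := Set.pi univ fun i => Ioo (-(w i)) (w i) with hB₀
  have hB₀m : MeasurableSet B₀ := MeasurableSet.univ_pi fun i => measurableSet_Ioo
  have hsub : regionBetween (ff ρ) (gg ρ) B₀ ⊆ regionBetween (ff ρ) (gg ρ) (BB ρ r) := by
    rintro ⟨z, t⟩ ⟨h1, h2⟩
    refine ⟨mem_BB.2 fun i => ?_, h2⟩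
    have h1i := h1 i (mem_univ i)
    rw [mem_Ioo] at h1i
    rw [abs_lt]
    constructor
    · calc -(ρ / r i) ≤ -(w i) := by linarith [hwle i]
        _ < z i := h1i.1
    · exact lt_of_lt_of_le h1i.2 (hwle i)
  have hSq : ∀ z ∈ B₀, Sq z ≤ 1/4 := by
    intro z hz
    have hb : ∀ i : Fin n, (z i)^2 ≤ (1/(2*((n:ℝ)+1)))^2 := by
      intro i
      have hzi := hz i (mem_univ i)
      rw [mem_Ioo] at hzi
      have habs : |z i| ≤ 1/(2*((n:ℝ)+1)) := by
        rw [abs_le]; constructor <;> nlinarith [hwsmall i]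
      calc (z i)^2 = |z i|^2 := (sq_abs _).symm
        _ ≤ (1/(2*((n:ℝ)+1)))^2 := by
            apply pow_le_pow_left₀ (abs_nonneg _) habs
    calc Sq z ≤ ∑ _i : Fin n, (1/(2*((n:ℝ)+1)))^2 := Finset.sum_le_sum fun i _ => hb i
      _ = (n:ℝ) * (1/(2*((n:ℝ)+1)))^2 := by
          rw [Finset.sum_const, Finset.card_univ, Fintype.card_fin, nsmul_eq_mul]
      _ ≤ 1/4 := by
          have heq : ((n:ℝ)) * (1/(2*((n:ℝ)+1)))^2 = (n:ℝ)/(4*((n:ℝ)+1)^2) := by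
            rw [div_pow, one_pow, mul_one_div]
            congr 1
            ring
          rw [heq, div_le_div_iff₀ (by positivity) (by norm_num)]
          nlinarith [(Nat.cast_nonneg n : (0:ℝ) ≤ (n:ℝ))]
  have hlen : ∀ z ∈ B₀, ENNReal.ofReal (ρ/2) ≤
      ENNReal.ofReal ((gg (n := n) ρ - ff (n := n) ρ) z) := by
    intro z hz
    apply ENNReal.ofReal_le_ofReal
    have := len_lower hρ (Sq_nonneg z) (hSq z hz)
    simp only [Pi.sub_apply, gg, ff]
    linarith
  have hprod : ∏ i, (2 * w i) = (∏ i, ρ / r i) * (1/((n:ℝ)+1))^n := by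
    have : ∀ i : Fin n, 2 * w i = (ρ / r i) * (1/((n:ℝ)+1)) := by
      intro i; rw [hw]; field_simp [(hrpos i).ne', hn1.ne']
    simp_rw [this]
    rw [Finset.prod_mul_distrib, Finset.prod_const, Finset.card_univ, Fintype.card_fin]
  calc ENNReal.ofReal (((1/2) * (1/((n:ℝ)+1))^n) * (ρ * ∏ i, ρ / r i))
      = ENNReal.ofReal (ρ/2) * ENNReal.ofReal (∏ i, (2 * w i)) := by
        rw [← ENNReal.ofReal_mul (by linarith), hprod]
        congr 1
        ring
    _ = ENNReal.ofReal (ρ/2) * volume B₀ := by rw [hB₀, volume_pi_Ioo fun i => (hwpos i).le]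
    _ = ∫⁻ _z in B₀, ENNReal.ofReal (ρ/2) := (setLIntegral_const _ _).symm
    _ ≤ ∫⁻ z in B₀, ENNReal.ofReal ((gg (n := n) ρ - ff (n := n) ρ) z) :=
        setLIntegral_mono' hB₀m hlen
    _ = volume (regionBetween (ff ρ) (gg ρ) B₀) := (volume_regionBetween' ρ r hB₀m).symm
    _ ≤ volume (regionBetween (ff ρ) (gg ρ) (BB ρ r)) := measure_mono hsub

lemma upper_main (ρ : ℝ) (r : Fin n → ℝ) (hρ : 0 < ρ) (h : ∀ i, 0 < ρ / r i) :
    volume (regionBetween (ff ρ) (gg ρ) (BB ρ r ∩ {z | Sq z ≤ 1/2})) ≤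
      ENNReal.ofReal ((8*ρ) * ∏ i, (2*(ρ/r i))) := by
  have hsm : MeasurableSet (BB ρ r ∩ {z | Sq z ≤ 1/2}) :=
    (BB_measurableSet ρ r).inter (measurableSet_le Sq_continuous.measurable measurable_const)
  rw [volume_regionBetween' ρ r hsm]
  calc ∫⁻ z in BB ρ r ∩ {z | Sq z ≤ 1/2}, ENNReal.ofReal ((gg (n := n) ρ - ff (n := n) ρ) z)
      ≤ ∫⁻ _z in BB ρ r ∩ {z | Sq z ≤ 1/2}, ENNReal.ofReal (8*ρ) := by
        apply setLIntegral_mono' hsm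
        intro z hz
        apply ENNReal.ofReal_le_ofReal
        have := len_upper1 hρ (Sq_nonneg z) hz.2
        simp only [Pi.sub_apply, gg, ff]
        linarith
    _ = ENNReal.ofReal (8*ρ) * volume (BB ρ r ∩ {z | Sq z ≤ 1/2}) := setLIntegral_const _ _
    _ ≤ ENNReal.ofReal (8*ρ) * volume (BB ρ r) :=
        mul_le_mul_of_nonneg_left (measure_mono inter_subset_left) (by positivity)
    _ = ENNReal.ofReal ((8*ρ) * ∏ i, (2*(ρ/r i))) := by
        rw [volume_BB h, ← ENNReal.ofReal_mul (by linarith)]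

lemma upper_term {m : ℕ} (ρ : ℝ) (r : Fin (m+1) → ℝ) (i : Fin (m+1)) (hρ : 0 < ρ)
    (hρ1 : ρ ≤ 1) (h : ∀ j, 0 < ρ / r j) :
    volume (regionBetween (ff ρ) (gg ρ) (BB ρ r)) ≤
      ENNReal.ofReal ((4*ρ*π) * ∏ j, (2*(ρ / r (i.succAbove j)))) := by
  classical
  set Ψ : ((Fin (m+1) → ℝ) × ℝ) → ((Fin m → ℝ) × (ℝ × ℝ)) :=
    fun p => (i.removeNth p.1, (p.2, p.1 i)) with hΨdef
  have hΨ : MeasurePreserving Ψ volume volume := by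
    have h1 : MeasurePreserving
        (Prod.map (⇑(MeasurableEquiv.piFinSuccAbove (fun _ : Fin (m+1) => ℝ) i)) (id : ℝ → ℝ))
        volume volume := by
      rw [Measure.volume_eq_prod, Measure.volume_eq_prod]
      exact (volume_preserving_piFinSuccAbove (fun _ : Fin (m+1) => ℝ) i).prod
        (MeasurePreserving.id _)
    have h2 : MeasurePreserving
        (fun p : (ℝ × (Fin m → ℝ)) × ℝ => (p.1.1, (p.1.2, p.2))) volume volume := by
      rw [Measure.volume_eq_prod (ℝ × (Fin m → ℝ)) ℝ, Measure.volume_eq_prod,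
        Measure.volume_eq_prod, Measure.volume_eq_prod]
      exact measurePreserving_prodAssoc _ _ _
    have h3 : MeasurePreserving
        (Prod.swap : ℝ × ((Fin m → ℝ) × ℝ) → ((Fin m → ℝ) × ℝ) × ℝ) volume volume := by
      rw [Measure.volume_eq_prod, Measure.volume_eq_prod]
      exact Measure.measurePreserving_swap
    have h4 : MeasurePreserving
        (fun p : ((Fin m → ℝ) × ℝ) × ℝ => (p.1.1, (p.1.2, p.2))) volume volume := by
      rw [Measure.volume_eq_prod ((Fin m → ℝ) × ℝ) ℝ, Measure.volume_eq_prod,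
        Measure.volume_eq_prod, Measure.volume_eq_prod]
      exact measurePreserving_prodAssoc _ _ _
    have hcomp := ((h4.comp h3).comp h2).comp h1
    have heq : ((((fun p : ((Fin m → ℝ) × ℝ) × ℝ => (p.1.1, (p.1.2, p.2))) ∘
        (Prod.swap : ℝ × ((Fin m → ℝ) × ℝ) → ((Fin m → ℝ) × ℝ) × ℝ)) ∘
        (fun p : (ℝ × (Fin m → ℝ)) × ℝ => (p.1.1, (p.1.2, p.2)))) ∘
        (Prod.map (⇑(MeasurableEquiv.piFinSuccAbove (fun _ : Fin (m+1) => ℝ) i))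
          (id : ℝ → ℝ))) = Ψ := by
      funext p
      simp [Ψ, MeasurableEquiv.piFinSuccAbove_apply, Prod.map]
    rwa [heq] at hcomp
  set Q : Set ((Fin m → ℝ) × (ℝ × ℝ)) :=
    {u | (∀ j, |u.1 j| < ρ / r (i.succAbove j)) ∧
      ((max (1-ρ) 0)^2 - Sq u.1 < u.2.1^2 + u.2.2^2 ∧
        u.2.1^2 + u.2.2^2 < (1+ρ)^2 - Sq u.1)} with hQdef
  have hQm : MeasurableSet Q := by
    apply MeasurableSet.inter
    · show MeasurableSet {u : (Fin m → ℝ) × (ℝ × ℝ) | ∀ j, |u.1 j| < ρ / r (i.succAbove j)}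
      rw [Set.setOf_forall]
      apply MeasurableSet.iInter
      intro j
      have : Measurable fun u : (Fin m → ℝ) × (ℝ × ℝ) => |u.1 j| :=
        ((measurable_pi_apply j).comp measurable_fst).abs
      exact measurableSet_lt this measurable_const
    · have hq : Measurable fun u : (Fin m → ℝ) × (ℝ × ℝ) => Sq u.1 :=
        Sq_continuous.measurable.comp measurable_fst
      have hv : Measurable fun u : (Fin m → ℝ) × (ℝ × ℝ) => u.2.1^2 + u.2.2^2 :=
        ((measurable_fst.comp measurable_snd).pow_const 2).add
          ((measurable_snd.comp measurable_snd).pow_const 2)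
      exact (measurableSet_lt (measurable_const.sub hq) hv).inter
        (measurableSet_lt hv (measurable_const.sub hq))
  have hsub : regionBetween (ff ρ) (gg ρ) (BB ρ r) ⊆ Ψ ⁻¹' Q := by
    rintro ⟨z, t⟩ ⟨hz, ht⟩
    rw [mem_BB] at hz
    rw [mem_Ioo] at ht
    have ht0 : t < 0 := lt_of_lt_of_le ht.2 (gg_nonpos ρ z)
    have hsum : Sq z = (z i)^2 + Sq (i.removeNth z) := by
      rw [Sq, Sq, Fin.sum_univ_succAbove (fun j => (z j)^2) i]
      rfl
    have hupper : t^2 < (1+ρ)^2 - Sq z := by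
      have h1 : -t < Real.sqrt ((1+ρ)^2 - Sq z) := by
        have := ht.1; rw [ff] at this; linarith
      have hapos : 0 < (1+ρ)^2 - Sq z := Real.sqrt_pos.1 (lt_of_le_of_lt (by linarith) h1)
      have := (Real.lt_sqrt (by linarith : (0:ℝ) ≤ -t)).1 h1
      nlinarith
    have hlower : (max (1-ρ) 0)^2 - Sq z < t^2 := by
      have h1 : Real.sqrt ((max (1-ρ) 0)^2 - Sq z) < -t := by
        have := ht.2; rw [gg] at this; linarith
      have := (Real.sqrt_lt' (by linarith : (0:ℝ) < -t)).1 h1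
      nlinarith
    refine ⟨fun j => ?_, ?_, ?_⟩
    · exact hz (i.succAbove j)
    · show (max (1-ρ) 0)^2 - Sq (i.removeNth z) < t^2 + (z i)^2
      linarith
    · show t^2 + (z i)^2 < (1+ρ)^2 - Sq (i.removeNth z)
      linarith
  have hbox : ∀ j, 0 < ρ / (fun j => r (i.succAbove j)) j := fun j => h _
  calc volume (regionBetween (ff ρ) (gg ρ) (BB ρ r))
      ≤ volume (Ψ ⁻¹' Q) := measure_mono hsub
    _ = volume Q := hΨ.measure_preimage hQm.nullMeasurableSet
    _ = ∫⁻ w, volume (Prod.mk w ⁻¹' Q) := by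
        rw [Measure.volume_eq_prod, Measure.prod_apply hQm]
    _ ≤ ∫⁻ w, (BB ρ (fun j => r (i.succAbove j))).indicator
          (fun _ => ENNReal.ofReal (4*ρ*π)) w := by
        apply lintegral_mono
        intro w
        by_cases hw : w ∈ BB ρ (fun j => r (i.succAbove j))
        · rw [indicator_of_mem hw]
          have hsec : Prod.mk w ⁻¹' Q ⊆
              {v : ℝ × ℝ | (max (1-ρ) 0)^2 - Sq w < v.1^2 + v.2^2 ∧
                v.1^2 + v.2^2 < (1+ρ)^2 - Sq w} := by
            intro v hv
            exact hv.2
          refine le_trans (measure_mono hsec) (le_trans (ann2D ?_) ?_)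
          · have hmax : (max (1-ρ) 0)^2 ≤ (1-ρ)^2 + 0 := by
              rcases max_cases (1-ρ) 0 with ⟨hm,_⟩|⟨hm,_⟩ <;> rw [hm] <;> nlinarith
            nlinarith
          · apply ENNReal.ofReal_le_ofReal
            have hmax : (1-ρ)^2 ≤ (max (1-ρ) 0)^2 := by
              rcases max_cases (1-ρ) 0 with ⟨hm,_⟩|⟨hm,_⟩ <;> rw [hm] <;> nlinarith
            nlinarith [Real.pi_pos]
        · rw [indicator_of_notMem hw]
          have hsec : Prod.mk w ⁻¹' Q = ∅ := by
            ext v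
            simp only [mem_preimage, hQdef, mem_setOf_eq, mem_empty_iff_false, iff_false]
            rintro ⟨h1, -⟩
            exact hw (mem_BB.2 h1)
          simp [hsec]
    _ = ENNReal.ofReal (4*ρ*π) * volume (BB ρ (fun j => r (i.succAbove j))) := by
        rw [lintegral_indicator_const (BB_measurableSet _ _)]
    _ = ENNReal.ofReal ((4*ρ*π) * ∏ j, (2*(ρ / r (i.succAbove j)))) := by
        rw [volume_BB hbox, ← ENNReal.ofReal_mul (by positivity)]

lemma upper_bound (ρ : ℝ) (r : Fin n → ℝ) (hρ : 0 < ρ) (hr : ∀ i, ρ ≤ r i ∧ r i ≤ 1) :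
    volume (regionBetween (ff ρ) (gg ρ) (BB ρ r)) ≤
      ENNReal.ofReal ((8*2^n + (n:ℝ) * (4*π*2^n*Real.sqrt (2*(n:ℝ)))) * (ρ * ∏ i, ρ / r i)) := by
  classical
  have hrpos : ∀ i, 0 < r i := fun i => lt_of_lt_of_le hρ (hr i).1
  have ht : ∀ i, 0 < ρ / r i := fun i => div_pos hρ (hrpos i)
  have htprod : 0 < ∏ i, ρ / r i := Finset.prod_pos fun i _ => ht i
  set B' : Set (Fin n → ℝ) := BB ρ r ∩ {z | Sq z ≤ 1/2} with hB'
  set D : Fin n → Set (Fin n → ℝ) :=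
    fun i => BB ρ r ∩ {z | 1/(2*(n:ℝ)) ≤ (z i)^2} with hD
  have hcover : regionBetween (ff ρ) (gg ρ) (BB ρ r) ⊆
      regionBetween (ff ρ) (gg ρ) B' ∪ ⋃ i, regionBetween (ff ρ) (gg ρ) (D i) := by
    rintro ⟨z, t⟩ ⟨hz, htz⟩
    by_cases hS : Sq z ≤ 1/2
    · exact Or.inl ⟨⟨hz, hS⟩, htz⟩
    · right
      push_neg at hS
      have hn : n ≠ 0 := by
        rintro rfl
        rw [Sq, Finset.univ_eq_empty, Finset.sum_empty] at hS
        norm_num at hS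
      have hex : ∃ i, 1/(2*(n:ℝ)) ≤ (z i)^2 := by
        by_contra hc
        push_neg at hc
        have hne : Nonempty (Fin n) := Fin.pos_iff_nonempty.1 (Nat.pos_of_ne_zero hn)
        have : Sq z < ∑ _i : Fin n, 1/(2*(n:ℝ)) := by
          apply Finset.sum_lt_sum_of_nonempty Finset.univ_nonempty
          exact fun i _ => hc i
        rw [Finset.sum_const, Finset.card_univ, Fintype.card_fin, nsmul_eq_mul,
          mul_one_div] at this
        have hn' : (0:ℝ) < (n:ℝ) := by exact_mod_cast Nat.pos_of_ne_zero hn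
        have heq : (n:ℝ) / (2*(n:ℝ)) = 1/2 := by
          rw [div_eq_div_iff (by positivity) (by norm_num)]
          ring
        rw [heq] at this
        linarith
      obtain ⟨i, hi⟩ := hex
      exact mem_iUnion.2 ⟨i, ⟨⟨hz, hi⟩, htz⟩⟩
  have hterm : ∀ i : Fin n, volume (regionBetween (ff ρ) (gg ρ) (D i)) ≤
      ENNReal.ofReal ((4*π*2^n*Real.sqrt (2*(n:ℝ))) * (ρ * ∏ j, ρ / r j)) := by
    intro i
    obtain ⟨m, rfl⟩ : ∃ m, n = m + 1 :=
      ⟨n - 1, (Nat.succ_pred_eq_of_pos (Nat.pos_of_ne_zero fun h => (h ▸ i).elim0)).symm⟩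
    rcases le_or_gt (1/(2*((m+1:ℕ):ℝ))) ((ρ/r i)^2) with hcase | hcase
    · -- use upper_term
      have hρ1 : ρ ≤ 1 := le_trans (hr i).1 (hr i).2
      have hDsub : regionBetween (ff ρ) (gg ρ) (D i) ⊆
          regionBetween (ff ρ) (gg ρ) (BB ρ r) := fun p hp => ⟨hp.1.1, hp.2⟩
      refine le_trans (measure_mono hDsub) (le_trans (upper_term ρ r i hρ hρ1 ht) ?_)
      apply ENNReal.ofReal_le_ofReal
      -- product manipulation
      set N : ℝ := ((m+1:ℕ):ℝ) with hN
      have hNpos : (0:ℝ) < N := by positivity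
      set ti := ρ / r i with hti
      have htipos : 0 < ti := ht i
      have hsq2 : 1 ≤ ti * Real.sqrt (2*N) := by
        have h2N : (0:ℝ) ≤ 2*N := by positivity
        have hss : Real.sqrt (2*N) ^ 2 = 2*N := Real.sq_sqrt h2N
        have h5 : 1 ≤ ti^2 * (2*N) := by
          have h6 := mul_le_mul_of_nonneg_right hcase h2N
          rw [div_mul_eq_mul_div, one_mul,
            div_self (by positivity : (2*N) ≠ 0)] at h6
          linarith
        nlinarith [hss, mul_nonneg htipos.le (Real.sqrt_nonneg (2*N))]
      have hA : (∏ j, (2*(ρ/r j))) = (2*ti) * ∏ j, (2*(ρ / r (i.succAbove j))) :=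
        Fin.prod_univ_succAbove (fun j => 2*(ρ/r j)) i
      have hB : (∏ j, (2*(ρ/r j))) = 2^(m+1) * ∏ j, (ρ/r j) := by
        rw [Finset.prod_mul_distrib, Finset.prod_const, Finset.card_univ, Fintype.card_fin]
      have hPnn : 0 ≤ ∏ j, (2*(ρ / r (i.succAbove j))) :=
        Finset.prod_nonneg fun j _ => by have := ht (i.succAbove j); linarith
      set P := ∏ j, (2*(ρ / r (i.succAbove j))) with hP
      set Qr := ∏ j, (ρ/r j) with hQr
      have hkey : P * (2*ti) = 2^(m+1) * Qr := by rw [mul_comm P]; rw [← hA, hB]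
      have hQrpos : 0 < Qr := htprod
      have hπ := Real.pi_pos
      have hs2N : 0 ≤ Real.sqrt (2*N) := Real.sqrt_nonneg _
      have h2ti : (0:ℝ) < 2*ti := by linarith
      have hPeq : P = 2^(m+1)*Qr/(2*ti) := (eq_div_iff h2ti.ne').2 hkey
      rw [hPeq, ← mul_div_assoc, div_le_iff₀ h2ti]
      have hK : (0:ℝ) < 4*π*2^(m+1)*ρ*Qr := by positivity
      nlinarith [mul_le_mul_of_nonneg_left hsq2 hK.le]
    · -- D i is empty
      have hDempty : D i = ∅ := by
        ext z
        simp only [hD, mem_inter_iff, mem_setOf_eq, mem_empty_iff_false, iff_false, not_and]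
        intro hz hge
        have h1 : |z i| < ρ / r i := mem_BB.1 hz i
        have : (z i)^2 < (ρ/r i)^2 := by
          have := abs_nonneg (z i)
          nlinarith [sq_abs (z i)]
        linarith
      rw [hDempty]
      have : regionBetween (ff (n := m+1) ρ) (gg (n := m+1) ρ) ∅ = ∅ := by
        ext p; simp [regionBetween]
      rw [this]
      simp
  calc volume (regionBetween (ff ρ) (gg ρ) (BB ρ r))
      ≤ volume (regionBetween (ff ρ) (gg ρ) B' ∪ ⋃ i, regionBetween (ff ρ) (gg ρ) (D i)) :=
        measure_mono hcover
    _ ≤ volume (regionBetween (ff ρ) (gg ρ) B') +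
        volume (⋃ i, regionBetween (ff ρ) (gg ρ) (D i)) := measure_union_le _ _
    _ ≤ ENNReal.ofReal ((8*ρ) * ∏ i, (2*(ρ/r i))) +
        ∑ i, ENNReal.ofReal ((4*π*2^n*Real.sqrt (2*(n:ℝ))) * (ρ * ∏ j, ρ / r j)) := by
        apply add_le_add (upper_main ρ r hρ ht)
        refine le_trans (measure_iUnion_fintype_le _ _) (Finset.sum_le_sum fun i _ => hterm i)
    _ ≤ ENNReal.ofReal ((8*2^n + (n:ℝ) * (4*π*2^n*Real.sqrt (2*(n:ℝ)))) * (ρ * ∏ i, ρ / r i)) := by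
        rw [Finset.sum_const, Finset.card_univ, Fintype.card_fin, nsmul_eq_mul]
        have h1 : (8*ρ) * ∏ i, (2*(ρ/r i)) = (8*2^n) * (ρ * ∏ i, ρ / r i) := by
          rw [Finset.prod_mul_distrib, Finset.prod_const, Finset.card_univ, Fintype.card_fin]
          ring
        rw [h1]
        have hnn1 : (0:ℝ) ≤ (8*2^n) * (ρ * ∏ i, ρ / r i) :=
          mul_nonneg (by positivity) (mul_nonneg hρ.le htprod.le)
        have hnn2 : (0:ℝ) ≤ (n:ℝ) * ((4*π*2^n*Real.sqrt (2*(n:ℝ))) * (ρ * ∏ j, ρ / r j)) :=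
          mul_nonneg (Nat.cast_nonneg n)
            (mul_nonneg (by positivity) (mul_nonneg hρ.le htprod.le))
        have h2 : ((n:ℕ):ENNReal) *
            ENNReal.ofReal ((4*π*2^n*Real.sqrt (2*(n:ℝ))) * (ρ * ∏ j, ρ / r j))
            = ENNReal.ofReal ((n:ℝ) * ((4*π*2^n*Real.sqrt (2*(n:ℝ))) * (ρ * ∏ j, ρ / r j))) := by
          rw [← ENNReal.ofReal_natCast n, ← ENNReal.ofReal_mul (Nat.cast_nonneg n)]
        rw [h2, ← ENNReal.ofReal_add hnn1 hnn2]
        exact ENNReal.ofReal_le_ofReal (le_of_eq (by ring))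


/-- `|F(r;ρ)| ∼ ρ·∏ (ρ/rᵢ)`, with constants depending only on the dimension. -/
theorem stmt_3 (n : ℕ) :
    ∃ c C : ℝ, 0 < c ∧ 0 < C ∧
      ∀ (ρ : ℝ) (r : Fin n → ℝ), 0 < ρ → (∀ i, ρ ≤ r i ∧ r i ≤ 1) →
        ENNReal.ofReal (c * (ρ * ∏ i, ρ / r i)) ≤ volume (curvedBoxF n r ρ) ∧
        volume (curvedBoxF n r ρ) ≤ ENNReal.ofReal (C * (ρ * ∏ i, ρ / r i)) := by
  refine ⟨(1/2) * (1/((n:ℝ)+1))^n,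
    8*2^n + (n:ℝ) * (4*π*2^n*Real.sqrt (2*(n:ℝ))), by positivity, by positivity, ?_⟩
  intro ρ r hρ hr
  rw [volume_curvedBoxF ρ r hρ]
  exact ⟨lower_bound ρ r hρ hr, upper_bound ρ r hρ hr⟩

end
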